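/- In the ISCP dynamic-programming setting, suppose index j+1 exists and blk(j+1) = blk(j) + 1 (i.e., S_{j+1} is the first set of its block and a previous block exists). Then for every W ⊆ α: OPT(W, j+1, 2) = 2 + OPT(W \ S_{j+1}, j, flag(blk(j))), where arithmetic is in ℕ ∪ {∞} with 2 + ∞ = ∞. -/

import Mathlib

/-- `OPTI S blk flag W j b` in the ISCP dynamic-programming setting: the infimum, over
all index sets `X ⊆ {i : i ≤ j}` covering `W`, containing at most one index from every
block `β_x` with `x ≤ blk j` and exactly one index from every such block whose (updated)
flag is `2`, of `2|X|` plus the number of blocks `β_x` (`x ≤ blk j`) with (updated) flag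
`1` that `X` misses; here the flag of block `blk j` is overridden to be `b`.  The value
is `∞` if no such `X` exists. -/
noncomputable def OPTI {α : Type*} [DecidableEq α] {m q : ℕ}
    (S : Fin m → Finset α) (blk : Fin m → Fin q) (flag : Fin q → ℕ)
    (W : Finset α) (j : Fin m) (b : ℕ) : ℕ∞ :=
  sInf { n : ℕ∞ | ∃ X : Finset (Fin m),
    (∀ i ∈ X, i ≤ j) ∧
    (W ⊆ X.biUnion S) ∧
    (∀ x : Fin q, x ≤ blk j → (X.filter (fun i => blk i = x)).card ≤ 1) ∧
    (∀ x : Fin q, x ≤ blk j → Function.update flag (blk j) b x = 2 →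
      (X.filter (fun i => blk i = x)).card = 1) ∧
    n = 2 * (X.card : ℕ∞) +
      ((Finset.univ.filter (fun x : Fin q =>
        x ≤ blk j ∧ Function.update flag (blk j) b x = 1 ∧
          ∀ i ∈ X, blk i ≠ x)).card : ℕ∞) }

/-- If `A` is obtained from `B` by shifting by `2`, then `sInf A = 2 + sInf B`. -/
lemma sInf_shift_two (A B : Set ℕ∞) (h1 : ∀ n ∈ B, 2 + n ∈ A)
    (h2 : ∀ n ∈ A, ∃ n' ∈ B, n = 2 + n') : sInf A = 2 + sInf B := by
  apply le_antisymm
  · rcases B.eq_empty_or_nonempty with hB | hB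
    · rw [hB, sInf_empty]
      simp
    · exact sInf_le (h1 _ (csInf_mem hB))
  · refine le_sInf fun n hn => ?_
    obtain ⟨n', hn', rfl⟩ := h2 n hn
    exact add_le_add le_rfl (sInf_le hn')

/-- ISCP recurrence when `S_{j+1}` is the first set of its block and a
previous block exists, for flag `b = 2`:
`OPT(W, j+1, 2) = 2 + OPT(W \\ S_{j+1}, j, flag(blk j))`. -/
theorem iscp_recurrence_new_block_flag_two
    {α : Type*} [DecidableEq α] {m q : ℕ} (hm : 0 < m) (hq : 0 < q)
    (S : Fin m → Finset α) (blk : Fin m → Fin q)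
    (hmono : Monotone blk) (hsurj : Function.Surjective blk)
    (flag : Fin q → ℕ) (hflag : ∀ x, flag x = 1 ∨ flag x = 2)
    (j j' : Fin m) (hj' : (j' : ℕ) = (j : ℕ) + 1)
    (hblk : (blk j' : ℕ) = (blk j : ℕ) + 1)
    (W : Finset α) :
    OPTI S blk flag W j' 2 = 2 + OPTI S blk flag (W \ S j') j (flag (blk j)) := by
  have hupd : Function.update flag (blk j) (flag (blk j)) = flag := Function.update_eq_self _ _
  have hjle : j ≤ j' := by rw [Fin.le_def]; omega
  have hjlt : j < j' := by rw [Fin.lt_def]; omega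
  have hbb : blk j < blk j' := by rw [Fin.lt_def]; omega
  have hxne : ∀ x : Fin q, x ≤ blk j → x ≠ blk j' := by
    intro x hx h
    rw [Fin.le_def] at hx
    have := congrArg Fin.val h
    omega
  have hDne : ∀ i : Fin m, i ≤ j → blk i ≠ blk j' := fun i hi => hxne _ (hmono hi)
  have hcount : ∀ Y : Finset (Fin m),
      (Finset.univ.filter (fun x : Fin q => x ≤ blk j' ∧
        Function.update flag (blk j') 2 x = 1 ∧ ∀ i ∈ Y, blk i ≠ x))
      = (Finset.univ.filter (fun x : Fin q => x ≤ blk j ∧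
        Function.update flag (blk j) (flag (blk j)) x = 1 ∧ ∀ i ∈ Y.erase j', blk i ≠ x)) := by
    intro Y
    ext x
    simp only [Finset.mem_filter, Finset.mem_univ, true_and, hupd]
    constructor
    · rintro ⟨hx1, hx2, hx3⟩
      have hne : x ≠ blk j' := by
        intro h; rw [h, Function.update_self] at hx2; omega
      have hxle : x ≤ blk j := by
        rw [Fin.le_def] at hx1 ⊢
        have : (x : ℕ) ≠ (blk j' : ℕ) := fun h => hne (Fin.ext h)
        omega
      exact ⟨hxle, by rwa [Function.update_of_ne hne] at hx2,
        fun i hi => hx3 i (Finset.mem_of_mem_erase hi)⟩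
    · rintro ⟨hx1, hx2, hx3⟩
      have hne : x ≠ blk j' := hxne x hx1
      refine ⟨hx1.trans hbb.le, by rwa [Function.update_of_ne hne], fun i hi => ?_⟩
      by_cases hij : i = j'
      · subst hij; exact fun h => hne h.symm
      · exact hx3 i (Finset.mem_erase.2 ⟨hij, hi⟩)
  unfold OPTI
  refine sInf_shift_two _ _ ?_ ?_
  · -- right-to-left: from a witness for (j, flag (blk j)) build one for (j', 2)
    rintro n ⟨X', h1', h2', h3', h4', rfl⟩
    have hj'notin : j' ∉ X' := fun h => absurd (h1' j' h) (not_le.2 hjlt)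
    have hempty : X'.filter (fun i => blk i = blk j') = ∅ :=
      Finset.filter_eq_empty_iff.2 (fun i hi => hDne i (h1' i hi))
    refine ⟨insert j' X', ?_, ?_, ?_, ?_, ?_⟩
    · intro i hi
      rcases Finset.mem_insert.1 hi with rfl | hi
      · exact le_rfl
      · exact (h1' i hi).trans hjle
    · intro a ha
      by_cases haS : a ∈ S j'
      · exact Finset.mem_biUnion.2 ⟨j', Finset.mem_insert_self _ _, haS⟩
      · obtain ⟨i, hi, hai⟩ := Finset.mem_biUnion.1 (h2' (Finset.mem_sdiff.2 ⟨ha, haS⟩))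
        exact Finset.mem_biUnion.2 ⟨i, Finset.mem_insert_of_mem hi, hai⟩
    · intro x hx
      by_cases hxeq : x = blk j'
      · subst hxeq
        rw [Finset.filter_insert, if_pos rfl, hempty]
        simp
      · have hxle : x ≤ blk j := by
          rw [Fin.le_def] at hx ⊢
          have : (x : ℕ) ≠ (blk j' : ℕ) := fun h => hxeq (Fin.ext h)
          omega
        rw [Finset.filter_insert, if_neg (fun h => hxeq h.symm)]
        exact h3' x hxle
    · intro x hx hfl
      by_cases hxeq : x = blk j'
      · subst hxeq
        rw [Finset.filter_insert, if_pos rfl, hempty]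
        simp
      · have hxle : x ≤ blk j := by
          rw [Fin.le_def] at hx ⊢
          have : (x : ℕ) ≠ (blk j' : ℕ) := fun h => hxeq (Fin.ext h)
          omega
        rw [Function.update_of_ne hxeq] at hfl
        rw [Finset.filter_insert, if_neg (fun h => hxeq h.symm)]
        exact h4' x hxle (by rw [hupd]; exact hfl)
    · rw [hcount (insert j' X'), Finset.erase_insert hj'notin,
        Finset.card_insert_of_notMem hj'notin]
      push_cast
      ring
  · -- left-to-right: from a witness for (j', 2) build one for (j, flag (blk j))
    rintro n ⟨X, h1, h2, h3, h4, rfl⟩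
    have hj'X : j' ∈ X := by
      have hcard := h4 (blk j') le_rfl (Function.update_self _ _ _)
      obtain ⟨i, hi⟩ := Finset.card_eq_one.1 hcard
      have him : i ∈ X.filter (fun i => blk i = blk j') := by
        rw [hi]; exact Finset.mem_singleton_self i
      obtain ⟨hiX, hib⟩ := Finset.mem_filter.1 him
      have hieq : i = j' := by
        by_contra hne
        have hij : i ≤ j' := h1 i hiX
        have hile : i ≤ j := by
          rw [Fin.le_def] at hij ⊢
          have : (i : ℕ) ≠ (j' : ℕ) := fun h => hne (Fin.ext h)
          omega
        exact hDne i hile hib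
      exact hieq ▸ hiX
    have hfe : ∀ x : Fin q, x ≤ blk j →
        (X.erase j').filter (fun i => blk i = x) = X.filter (fun i => blk i = x) := by
      intro x hx
      rw [Finset.filter_erase]
      exact Finset.erase_eq_of_notMem
        (fun h => hxne x hx ((Finset.mem_filter.1 h).2).symm)
    refine ⟨_, ⟨X.erase j', ?_, ?_, ?_, ?_, rfl⟩, ?_⟩
    · intro i hi
      obtain ⟨hne, hiX⟩ := Finset.mem_erase.1 hi
      have hij := h1 i hiX
      rw [Fin.le_def] at hij ⊢
      have : (i : ℕ) ≠ (j' : ℕ) := fun h => hne (Fin.ext h)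
      omega
    · intro a ha
      obtain ⟨haW, haS⟩ := Finset.mem_sdiff.1 ha
      obtain ⟨i, hiX, hai⟩ := Finset.mem_biUnion.1 (h2 haW)
      exact Finset.mem_biUnion.2 ⟨i, Finset.mem_erase.2 ⟨fun h => haS (h ▸ hai), hiX⟩, hai⟩
    · intro x hx
      rw [hfe x hx]
      exact h3 x (hx.trans hbb.le)
    · intro x hx hfl
      rw [hupd] at hfl
      rw [hfe x hx]
      exact h4 x (hx.trans hbb.le)
        (by rw [Function.update_of_ne (hxne x hx)]; exact hfl)
    · rw [hcount X, ← Finset.card_erase_add_one hj'X]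
      push_cast
      ring
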